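/- If f = p^r is a power of a single monic irreducible polynomial p of degree d over F_q, then X_{dℓ}(σ_f) = 1/ℓ for every 1 ≤ ℓ ≤ r, and X_m(σ_f) = 0 whenever d does not divide m or m > dr. -/

import Mathlib

open Polynomial UniqueFactorizationMonoid

/-- `cycleCount σ k` is the number of `k`-cycles of `σ` (with `1`-cycles = fixed points). -/
def cycleCount {α : Type*} [Fintype α] [DecidableEq α] (σ : Equiv.Perm α) (k : ℕ) : ℕ :=
  if k = 1 then (Finset.univ.filter fun x => σ x = x).card else Multiset.count k σ.cycleType

/-- The permutation of the grid `{1,…,r} × Z/dZ` acting by `h k` on the fiber over `k`. -/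
def gridPerm (r d : ℕ) (h : Fin d → Equiv.Perm (Fin r)) : Equiv.Perm (Fin r × Fin d) where
  toFun p := (h p.2 p.1, p.2)
  invFun p := ((h p.2).symm p.1, p.2)
  left_inv p := by simp
  right_inv p := by simp

variable {F : Type*} [Field F] [DecidableEq F]

/-- The finite set of distinct monic irreducible factors of `f`. -/
noncomputable def facSet (f : F[X]) : Finset F[X] := (normalizedFactors f).toFinset

/-- The set of roots of `f` with multiplicity: `T_f = {(p,j,k) : p ∣ f irreducible,
1 ≤ j ≤ r_p, k ∈ Z/d_pZ}` where `r_p` is the multiplicity of `p` in `f` and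
`d_p = deg p`. -/
abbrev Tf (f : F[X]) :=
  Σ p : {x // x ∈ facSet f},
    Fin ((normalizedFactors f).count (p : F[X])) × Fin ((p : F[X]).natDegree)

/-- The Young subgroup `H_f = ∏ᵢ (S_{rᵢ})^{dᵢ}` stabilizing the root tuple of `f`. -/
abbrev Hf (f : F[X]) :=
  ∀ p : {x // x ∈ facSet f},
    Fin ((p : F[X]).natDegree) → Equiv.Perm (Fin ((normalizedFactors f).count (p : F[X])))

/-- The lift `τ_f(i,j,k) = (i,j,k+1)` of the Frobenius action on the roots of `f`. -/
noncomputable def tauF (f : F[X]) : Equiv.Perm (Tf f) :=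
  Equiv.sigmaCongrRight fun _ => (Equiv.refl _).prodCongr (finRotate _)

/-- The permutation of `T_f` induced by `h ∈ H_f`. -/
noncomputable def hPermF (f : F[X]) (h : Hf f) : Equiv.Perm (Tf f) :=
  Equiv.sigmaCongrRight fun p => gridPerm _ _ (h p)

open Equiv Function Finset

/-- Collapse a sigma type over a `Unique` index. -/
def sigmaUniqueIndex {ι : Type*} [Unique ι] (β : ι → Type*) : (Σ i, β i) ≃ β default where
  toFun x := cast (congrArg β (Unique.eq_default x.1)) x.2
  invFun y := ⟨default, y⟩
  left_inv := by
    rintro ⟨i, y⟩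
    have h : i = default := Unique.eq_default i
    subst h
    rfl
  right_inv y := rfl


variable {α : Type*} [Fintype α] [DecidableEq α]

lemma perm_mem_periodicPts (σ : Equiv.Perm α) (x : α) : x ∈ periodicPts σ := by
  refine ⟨orderOf σ, orderOf_pos σ, ?_⟩
  show σ^[orderOf σ] x = x
  rw [← Equiv.Perm.coe_pow, pow_orderOf_eq_one]; rfl

lemma perm_mp_pos (σ : Equiv.Perm α) (x : α) : 0 < minimalPeriod σ x :=
  minimalPeriod_pos_of_mem_periodicPts (perm_mem_periodicPts σ x)

lemma perm_isPeriodicPt_iff (σ : Equiv.Perm α) (n : ℕ) (x : α) :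
    IsPeriodicPt σ n x ↔ (σ ^ n) x = x := by
  unfold IsPeriodicPt IsFixedPt
  rw [Equiv.Perm.coe_pow]

lemma mp_eq_card_support_cycleOf (σ : Equiv.Perm α) (x : α) (hx : x ∈ σ.support) :
    minimalPeriod σ x = (σ.cycleOf x).support.card := by
  have hc : (σ.cycleOf x).IsCycle := Equiv.Perm.isCycle_cycleOf σ (Equiv.Perm.mem_support.mp hx)
  rw [← hc.orderOf]
  have key : ∀ n : ℕ, IsPeriodicPt σ n x ↔ orderOf (σ.cycleOf x) ∣ n := by
    intro n
    rw [perm_isPeriodicPt_iff, ← Equiv.Perm.cycleOf_pow_apply_self, orderOf_dvd_iff_pow_eq_one,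
      ← hc.pow_eq_one_iff' (x := x)]
    · rw [Equiv.Perm.cycleOf_apply_self]
      exact Equiv.Perm.mem_support.mp hx
  have h1 : minimalPeriod σ x ∣ orderOf (σ.cycleOf x) :=
    isPeriodicPt_iff_minimalPeriod_dvd.mp ((key _).mpr dvd_rfl)
  have h2 : orderOf (σ.cycleOf x) ∣ minimalPeriod σ x :=
    (key _).mp (isPeriodicPt_minimalPeriod σ x)
  exact Nat.dvd_antisymm h1 h2

lemma perm_mp_le_card (σ : Equiv.Perm α) (x : α) : minimalPeriod σ x ≤ Fintype.card α := by
  by_cases hx : x ∈ σ.support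
  · rw [mp_eq_card_support_cycleOf σ x hx]; exact Finset.card_le_univ _
  · have : σ x = x := Equiv.Perm.notMem_support.mp hx
    have : minimalPeriod σ x = 1 := by
      rw [minimalPeriod_eq_one_iff_isFixedPt]; exact this
    rw [this]
    exact Fintype.card_pos_iff.mpr ⟨x⟩



variable {α : Type*} [Fintype α] [DecidableEq α]

lemma cycleCount_mul_eq (σ : Equiv.Perm α) (k : ℕ) (hk : 1 ≤ k) :
    cycleCount σ k * k = (univ.filter fun x => minimalPeriod σ x = k).card := by
  rcases eq_or_lt_of_le hk with h1 | h2
  · -- k = 1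
    rw [← h1]
    unfold cycleCount
    rw [if_pos rfl, mul_one]
    congr 1
    ext x
    simp [Function.minimalPeriod_eq_one_iff_isFixedPt, Function.IsFixedPt]
  · have hk2 : 2 ≤ k := h2
    unfold cycleCount
    rw [if_neg (by omega)]
    have hcount : Multiset.count k σ.cycleType
        = (σ.cycleFactorsFinset.filter fun c => c.support.card = k).card := by
      rw [Equiv.Perm.cycleType_def, Multiset.count_map, Finset.card, Finset.filter_val]
      congr 1
      apply Multiset.filter_congr
      intro c _
      simp [eq_comm]
    have hset : (univ.filter fun x => Function.minimalPeriod σ x = k)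
        = (σ.cycleFactorsFinset.filter fun c => c.support.card = k).biUnion
            Equiv.Perm.support := by
      ext x
      simp only [mem_filter, mem_univ, true_and, mem_biUnion]
      constructor
      · intro hx
        have hxs : x ∈ σ.support := by
          by_contra h
          have : σ x = x := Equiv.Perm.notMem_support.mp h
          have : Function.minimalPeriod σ x = 1 := by
            rw [Function.minimalPeriod_eq_one_iff_isFixedPt]; exact this
          omega
        refine ⟨σ.cycleOf x, ⟨Equiv.Perm.cycleOf_mem_cycleFactorsFinset_iff.mpr hxs,
            by rw [← mp_eq_card_support_cycleOf σ x hxs]; exact hx⟩, ?_⟩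
        rw [Equiv.Perm.mem_support_cycleOf_iff]
        exact ⟨Equiv.Perm.SameCycle.refl _ _, hxs⟩
      · rintro ⟨c, ⟨hcf, hck⟩, hxc⟩
        have hcx : c = σ.cycleOf x := Equiv.Perm.cycle_is_cycleOf hxc hcf
        have hxs : x ∈ σ.support := by
          rw [Equiv.Perm.mem_support]
          have h1 := (Equiv.Perm.mem_cycleFactorsFinset_iff.mp hcf).2 x hxc
          have h2 := Equiv.Perm.mem_support.mp hxc
          rw [h1] at h2; exact h2
        rw [mp_eq_card_support_cycleOf σ x hxs, ← hcx]
        exact hck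
    rw [hset, Finset.card_biUnion, hcount]
    · rw [Finset.sum_congr rfl (fun c hc => (mem_filter.mp hc).2), Finset.sum_const, smul_eq_mul]
    · intro c hc c' hc' hne
      have := Equiv.Perm.cycleFactorsFinset_pairwise_disjoint σ
        (mem_filter.mp hc).1 (mem_filter.mp hc').1 hne
      exact this.disjoint_support
lemma mp_permCongr {β : Type*} (e : α ≃ β) (σ : Equiv.Perm α) (x : α) :
    Function.minimalPeriod (e.permCongr σ) (e x) = Function.minimalPeriod σ x := by
  have key : ∀ n, (⇑(e.permCongr σ))^[n] (e x) = e (σ^[n] x) := by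
    intro n
    induction n with
    | zero => rfl
    | succ n ih =>
      rw [Function.iterate_succ_apply', Function.iterate_succ_apply', ih]
      simp
  have hiff : ∀ n, IsPeriodicPt (⇑(e.permCongr σ)) n (e x) ↔ IsPeriodicPt (⇑σ) n x := by
    intro n
    unfold Function.IsPeriodicPt Function.IsFixedPt
    rw [key]
    exact e.apply_eq_iff_eq
  exact Nat.dvd_antisymm
    (isPeriodicPt_iff_minimalPeriod_dvd.mp ((hiff _).mpr (isPeriodicPt_minimalPeriod σ x)))
    (isPeriodicPt_iff_minimalPeriod_dvd.mp ((hiff _).mp (isPeriodicPt_minimalPeriod _ (e x))))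

lemma cycleCount_eq_zero_of_no_mp (σ : Equiv.Perm α) (k : ℕ) (hk : 1 ≤ k)
    (h : ∀ x, Function.minimalPeriod σ x ≠ k) : cycleCount σ k = 0 := by
  have := cycleCount_mul_eq σ k hk
  have hempty : (univ.filter fun x => Function.minimalPeriod σ x = k) = ∅ := by
    apply Finset.filter_eq_empty_iff.mpr
    intro x _
    exact h x
  rw [hempty] at this
  simp only [Finset.card_empty] at this
  rcases Nat.mul_eq_zero.mp this with h | h
  · exact h
  · omega

lemma count_zero_cycleType (σ : Equiv.Perm α) : Multiset.count 0 σ.cycleType = 0 :=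
  Multiset.count_eq_zero.mpr fun h => by have := Equiv.Perm.two_le_of_mem_cycleType h; omega

lemma cycleCount_permCongr {β : Type*} [Fintype β] [DecidableEq β] (e : α ≃ β)
    (σ : Equiv.Perm α) (k : ℕ) : cycleCount (e.permCongr σ) k = cycleCount σ k := by
  rcases Nat.eq_zero_or_pos k with rfl | hk
  · unfold cycleCount
    rw [if_neg (by omega), if_neg (by omega), count_zero_cycleType, count_zero_cycleType]
  · apply Nat.eq_of_mul_eq_mul_right hk
    rw [cycleCount_mul_eq _ _ hk, cycleCount_mul_eq _ _ hk]
    apply Finset.card_bij (fun (y : β) (_ : y ∈ _) => e.symm y)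
    · intro y hy
      simp only [mem_filter, mem_univ, true_and] at hy ⊢
      rw [← mp_permCongr e σ (e.symm y)] at *
      rwa [e.apply_symm_apply] at *
    · intro y hy y' hy' hee
      exact e.symm.injective hee
    · intro x hx
      refine ⟨e x, ?_, by simp⟩
      simp only [mem_filter, mem_univ, true_and] at hx ⊢
      rw [mp_permCongr e σ x]
      exact hx
lemma card_filter_equiv {γ δ : Type*} [Fintype γ] [Fintype δ] (E : γ ≃ δ)
    (P : δ → Prop) [DecidablePred P] :
    (univ.filter fun a => P (E a)).card = (univ.filter P).card := by
  apply Finset.card_bij (fun a (_ : a ∈ _) => E a)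
  · intro a ha
    simpa using (mem_filter.mp ha).2
  · intro a _ a' _ h
    exact E.injective h
  · intro b hb
    exact ⟨E.symm b, by simpa using (mem_filter.mp hb).2, by simp⟩

lemma card_filter_prod {γ δ : Type*} [Fintype γ] [Fintype δ] (P : γ × δ → Prop)
    [DecidablePred P] :
    (univ.filter P).card = ∑ a : γ, (univ.filter fun b => P (a, b)).card := by
  rw [Finset.card_filter]
  rw [Fintype.sum_prod_type]
  congr 1
  ext a
  rw [Finset.card_filter]

lemma mp_decomposeFin_zero {n : ℕ} (e : Equiv.Perm (Fin n)) :
    Function.minimalPeriod (⇑(Equiv.Perm.decomposeFin.symm (0, e))) 0 = 1 := by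
  rw [Function.minimalPeriod_eq_one_iff_isFixedPt]
  show Equiv.Perm.decomposeFin.symm (0, e) 0 = 0
  simp

lemma mp_decomposeFin_succ {n : ℕ} (j : Fin n) (e : Equiv.Perm (Fin n)) :
    Function.minimalPeriod (⇑(Equiv.Perm.decomposeFin.symm (j.succ, e))) 0
      = Function.minimalPeriod (⇑e) j + 1 := by
  set σ := Equiv.Perm.decomposeFin.symm (j.succ, e) with hσ
  set L := Function.minimalPeriod (⇑e) j with hLdef
  have hL1 : 1 ≤ L := perm_mp_pos e j
  have hiter : ∀ t, (⇑e)^[t] j = j → L ∣ t := fun t ht =>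
    isPeriodicPt_iff_minimalPeriod_dvd.mp ht
  have traj : ∀ t, 1 ≤ t → t ≤ L → (⇑σ)^[t] 0 = ((⇑e)^[t - 1] j).succ := by
    intro t
    induction t with
    | zero => omega
    | succ t ih =>
      intro _ htL
      rcases Nat.eq_zero_or_pos t with rfl | ht1
      · show σ 0 = ((⇑e)^[0] j).succ
        simp [hσ]
      · have hstep := ih ht1 (by omega)
        rw [Function.iterate_succ_apply', hstep]
        have hne : (⇑e)^[t - 1] j ≠ j ∨ t - 1 = 0 → True := fun _ => trivial
        have happ : σ (((⇑e)^[t - 1] j).succ)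
            = Equiv.swap 0 j.succ ((e ((⇑e)^[t - 1] j)).succ) := by
          rw [hσ]
          exact Equiv.Perm.decomposeFin_symm_apply_succ _ _ _
        rw [happ, ← Function.iterate_succ_apply' (⇑e) (t-1) j]
        have ht' : t - 1 + 1 = t := by omega
        simp only [Nat.succ_eq_add_one, ht']
        have hnej : (⇑e)^[t] j ≠ j := by
          intro h
          have := hiter t h
          have : L ≤ t := Nat.le_of_dvd ht1 this
          omega
        rw [Equiv.swap_apply_of_ne_of_ne (Fin.succ_ne_zero _) (by
          intro h
          exact hnej (Fin.succ_injective _ h))]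
        congr 1
  have hper : (⇑σ)^[L + 1] 0 = 0 := by
    rw [Function.iterate_succ_apply', traj L hL1 le_rfl]
    have happ : σ (((⇑e)^[L - 1] j).succ)
        = Equiv.swap 0 j.succ ((e ((⇑e)^[L - 1] j)).succ) := by
      rw [hσ]
      exact Equiv.Perm.decomposeFin_symm_apply_succ _ _ _
    rw [happ, ← Function.iterate_succ_apply' (⇑e) (L-1) j]
    have ht' : L - 1 + 1 = L := by omega
    simp only [Nat.succ_eq_add_one, ht']
    rw [Function.iterate_minimalPeriod, Equiv.swap_apply_right]
  have hub : Function.minimalPeriod (⇑σ) 0 ≤ L + 1 :=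
    Function.IsPeriodicPt.minimalPeriod_le (by omega) hper
  have hlb : ¬ Function.minimalPeriod (⇑σ) 0 ≤ L := by
    intro h
    have h1 : 1 ≤ Function.minimalPeriod (⇑σ) 0 := perm_mp_pos σ 0
    have := traj _ h1 h
    rw [Function.iterate_minimalPeriod] at this
    exact Fin.succ_ne_zero _ this.symm
  omega
lemma countMP : ∀ (n : ℕ) (ℓ : ℕ) (i : Fin n), 1 ≤ ℓ → ℓ ≤ n →
    (univ.filter fun σ : Equiv.Perm (Fin n) => Function.minimalPeriod (⇑σ) i = ℓ).card
      = (n - 1).factorial := by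
  intro n
  induction n with
  | zero => intro ℓ i _ _; exact i.elim0
  | succ n IH =>
    intro ℓ i h1 h2
    have hindep : (univ.filter fun σ : Equiv.Perm (Fin (n+1)) =>
          Function.minimalPeriod (⇑σ) i = ℓ).card
        = (univ.filter fun σ : Equiv.Perm (Fin (n+1)) =>
          Function.minimalPeriod (⇑σ) 0 = ℓ).card := by
      apply Finset.card_bij (fun σ (_ : σ ∈ _) => (Equiv.swap i 0).permCongr σ)
      · intro σ hσ
        simp only [mem_filter, mem_univ, true_and] at hσ ⊢
        have h := mp_permCongr (Equiv.swap i 0) σ i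
        rw [Equiv.swap_apply_left] at h
        rw [h]; exact hσ
      · intro σ _ σ' _ h
        exact (Equiv.permCongr (Equiv.swap i 0)).injective h
      · intro τ hτ
        refine ⟨(Equiv.swap i 0).permCongr τ, ?_, by ext x; simp [Equiv.permCongr_apply]⟩
        simp only [mem_filter, mem_univ, true_and] at hτ ⊢
        have h := mp_permCongr (Equiv.swap i 0) τ 0
        rw [Equiv.swap_apply_right] at h
        rw [h]; exact hτ
    rw [hindep,
      ← card_filter_equiv Equiv.Perm.decomposeFin.symm
        (fun σ : Equiv.Perm (Fin (n+1)) => Function.minimalPeriod (⇑σ) 0 = ℓ),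
      card_filter_prod, Fin.sum_univ_succ]
    rcases Nat.lt_or_ge ℓ 2 with hl1 | hl2
    · have hℓ : ℓ = 1 := by omega
      subst hℓ
      have t0 : (univ.filter fun e : Equiv.Perm (Fin n) =>
          Function.minimalPeriod (⇑(Equiv.Perm.decomposeFin.symm ((0 : Fin (n+1)), e))) 0 = 1)
          = univ := by
        apply Finset.filter_true_of_mem
        intro e _
        exact mp_decomposeFin_zero e
      rw [t0]
      have ts : ∀ j : Fin n, (univ.filter fun e : Equiv.Perm (Fin n) =>
          Function.minimalPeriod (⇑(Equiv.Perm.decomposeFin.symm (j.succ, e))) 0 = 1).card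
          = 0 := by
        intro j
        rw [Finset.card_eq_zero]
        apply Finset.filter_eq_empty_iff.mpr
        intro e _
        rw [mp_decomposeFin_succ]
        have := perm_mp_pos e j
        omega
      rw [Finset.sum_congr rfl (fun j _ => ts j), Finset.sum_const, smul_eq_mul, mul_zero,
        add_zero, Finset.card_univ, Fintype.card_perm, Fintype.card_fin]
      simp
    · obtain ⟨l, rfl⟩ : ∃ l, ℓ = l + 1 := ⟨ℓ - 1, by omega⟩
      have hl1' : 1 ≤ l := by omega
      have hln : l ≤ n := by omega
      have hn1 : 0 < n := by omega
      have t0 : (univ.filter fun e : Equiv.Perm (Fin n) =>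
          Function.minimalPeriod (⇑(Equiv.Perm.decomposeFin.symm ((0 : Fin (n+1)), e))) 0 = l + 1).card
          = 0 := by
        rw [Finset.card_eq_zero]
        apply Finset.filter_eq_empty_iff.mpr
        intro e _
        rw [mp_decomposeFin_zero]
        omega
      have ts : ∀ j : Fin n, (univ.filter fun e : Equiv.Perm (Fin n) =>
          Function.minimalPeriod (⇑(Equiv.Perm.decomposeFin.symm (j.succ, e))) 0 = l + 1).card
          = (n - 1).factorial := by
        intro j
        have : (univ.filter fun e : Equiv.Perm (Fin n) =>
            Function.minimalPeriod (⇑(Equiv.Perm.decomposeFin.symm (j.succ, e))) 0 = l + 1)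
            = (univ.filter fun e : Equiv.Perm (Fin n) =>
            Function.minimalPeriod (⇑e) j = l) := by
          apply Finset.filter_congr
          intro e _
          rw [mp_decomposeFin_succ]
          omega
        rw [this]
        exact IH l j hl1' hln
      rw [t0, Finset.sum_congr rfl (fun j _ => ts j), Finset.sum_const, smul_eq_mul,
        Finset.card_univ, Fintype.card_fin, zero_add, Nat.mul_factorial_pred hn1.ne']
      simp
/-! ### Grid permutations -/

def QG {r d : ℕ} (h : Fin d → Equiv.Perm (Fin r)) : Equiv.Perm (Fin r × Fin d) :=
  (Equiv.refl (Fin r)).prodCongr (finRotate d) * gridPerm r d h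

section Grid

variable {r m : ℕ}
open Fin.NatCast Fin.CommRing

lemma QG_apply (h : Fin (m+1) → Equiv.Perm (Fin r)) (x : Fin r × Fin (m+1)) :
    QG h x = (h x.2 x.1, x.2 + 1) := by
  show ((Equiv.refl (Fin r)).prodCongr (finRotate (m+1))) (gridPerm _ _ h x) = _
  simp [gridPerm]

lemma QG_iterate_snd (h : Fin (m+1) → Equiv.Perm (Fin r)) (n : ℕ) (x : Fin r × Fin (m+1)) :
    ((⇑(QG h))^[n] x).2 = x.2 + (n : Fin (m+1)) := by
  induction n with
  | zero => simp
  | succ n ih =>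
    rw [Function.iterate_succ_apply', QG_apply, ih]
    show x.2 + (n : Fin (m+1)) + 1 = _
    push_cast
    ring

lemma QG_agree (n : ℕ) (g g' : Fin (m+1) → Equiv.Perm (Fin r)) :
    ∀ (x : Fin r × Fin (m+1)),
      (∀ j : ℕ, j < n → g (x.2 + (j : Fin (m+1))) = g' (x.2 + (j : Fin (m+1)))) →
      (⇑(QG g))^[n] x = (⇑(QG g'))^[n] x := by
  induction n with
  | zero => intro x _; rfl
  | succ n ih =>
    intro x hag
    rw [Function.iterate_succ_apply, Function.iterate_succ_apply]
    have h0 : QG g x = QG g' x := by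
      rw [QG_apply, QG_apply]
      have := hag 0 (by omega)
      simp only [Nat.cast_zero, add_zero] at this
      rw [this]
    rw [h0]
    apply ih
    intro j hj
    have hthis := hag (j + 1) (by omega)
    have harith : x.2 + ((j + 1 : ℕ) : Fin (m+1)) = (QG g' x).2 + (j : Fin (m+1)) := by
      rw [QG_apply]
      push_cast
      ring
    rw [harith] at hthis
    exact hthis

lemma QG_fiber (h : Fin (m+1) → Equiv.Perm (Fin r)) (k : Fin (m+1)) :
    ∀ x : Fin r × Fin (m+1), x.2 = k ↔ ((QG h ^ (m+1)) x).2 = k := by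
  intro x
  have : (⇑(QG h ^ (m+1))) x = (⇑(QG h))^[m+1] x := by
    rw [Equiv.Perm.coe_pow]
  rw [this, QG_iterate_snd]
  rw [Fin.natCast_self, add_zero]

/-- The fiber over `k` identified with `Fin r`. -/
def fiberEquiv (r : ℕ) {d : ℕ} (k : Fin d) : Fin r ≃ {x : Fin r × Fin d // x.2 = k} where
  toFun i := ⟨(i, k), rfl⟩
  invFun x := x.1.1
  left_inv i := rfl
  right_inv := by rintro ⟨⟨i, k'⟩, rfl⟩; rfl

/-- The "monodromy" permutation of the fiber over `k`, i.e. `(QG h)^d` restricted. -/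
def MkPerm (h : Fin (m+1) → Equiv.Perm (Fin r)) (k : Fin (m+1)) : Equiv.Perm (Fin r) :=
  (Equiv.permCongr (fiberEquiv r k).symm) ((QG h ^ (m+1)).subtypePerm (fun x => (QG_fiber h k x).symm))

lemma MkPerm_apply (h : Fin (m+1) → Equiv.Perm (Fin r)) (k : Fin (m+1)) (i : Fin r) :
    MkPerm h k i = ((⇑(QG h))^[m+1] (i, k)).1 := by
  show (((QG h ^ (m+1)).subtypePerm (fun x => (QG_fiber h k x).symm)) (⟨(i, k), rfl⟩ : {x : Fin r × Fin (m+1) // x.2 = k})).1.1 = _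
  rw [Equiv.Perm.subtypePerm_apply]
  simp only [Equiv.Perm.coe_pow]

lemma MkPerm_iterate (h : Fin (m+1) → Equiv.Perm (Fin r)) (k : Fin (m+1)) (i : Fin r) (t : ℕ) :
    ((⇑(MkPerm h k))^[t] i, k) = (⇑(QG h))^[(m+1) * t] (i, k) := by
  induction t with
  | zero => simp
  | succ t ih =>
    have hsplit : (⇑(QG h))^[(m+1)*(t+1)] (i, k)
        = (⇑(QG h))^[m+1] ((⇑(QG h))^[(m+1)*t] (i, k)) := by
      rw [← Function.iterate_add_apply]
      congr 1
      ring
    rw [hsplit, ← ih, Function.iterate_succ_apply', MkPerm_apply]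
    have h2 : ((⇑(QG h))^[m+1] ((⇑(MkPerm h k))^[t] i, k)).2 = k := by
      rw [QG_iterate_snd, Fin.natCast_self, add_zero]
    exact Prod.ext rfl h2.symm

lemma QG_periodic_iff (h : Fin (m+1) → Equiv.Perm (Fin r)) (k : Fin (m+1)) (i : Fin r) (t : ℕ) :
    Function.IsPeriodicPt (⇑(QG h)) ((m+1) * t) (i, k)
      ↔ Function.IsPeriodicPt (⇑(MkPerm h k)) t i := by
  unfold Function.IsPeriodicPt Function.IsFixedPt
  rw [← MkPerm_iterate]
  constructor
  · intro hx
    exact congrArg Prod.fst hx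
  · intro hx
    rw [hx]

lemma QG_dvd_of_periodic (h : Fin (m+1) → Equiv.Perm (Fin r)) (x : Fin r × Fin (m+1)) (n : ℕ)
    (hn : Function.IsPeriodicPt (⇑(QG h)) n x) : (m+1) ∣ n := by
  have h2 := congrArg Prod.snd hn
  rw [QG_iterate_snd] at h2
  have : (n : Fin (m+1)) = 0 := by
    have := add_left_cancel (a := x.2) (b := (n : Fin (m+1))) (c := 0) (by rw [add_zero]; exact h2)
    exact this
  exact (Fin.natCast_eq_zero).mp this

lemma QG_mp (h : Fin (m+1) → Equiv.Perm (Fin r)) (k : Fin (m+1)) (i : Fin r) :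
    Function.minimalPeriod (⇑(QG h)) (i, k) = (m+1) * Function.minimalPeriod (⇑(MkPerm h k)) i := by
  set L := Function.minimalPeriod (⇑(MkPerm h k)) i with hL
  have hL1 : 1 ≤ L := perm_mp_pos _ i
  apply Nat.dvd_antisymm
  · apply isPeriodicPt_iff_minimalPeriod_dvd.mp
    exact (QG_periodic_iff h k i L).mpr (isPeriodicPt_minimalPeriod _ i)
  · have hper := isPeriodicPt_minimalPeriod (⇑(QG h)) (i, k)
    obtain ⟨t, ht⟩ := QG_dvd_of_periodic h (i, k) _ hper
    rw [ht] at hper ⊢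
    have := isPeriodicPt_iff_minimalPeriod_dvd.mp ((QG_periodic_iff h k i t).mp hper)
    exact Nat.mul_dvd_mul_left _ this

lemma MkPerm_update (h : Fin (m+1) → Equiv.Perm (Fin r)) (k : Fin (m+1))
    (σ : Equiv.Perm (Fin r)) :
    MkPerm (Function.update h k σ) k = MkPerm (Function.update h k 1) k * σ := by
  apply Equiv.ext
  intro i
  rw [Equiv.Perm.mul_apply, MkPerm_apply, MkPerm_apply]
  rw [Function.iterate_succ_apply, Function.iterate_succ_apply]
  have h1 : QG (Function.update h k σ) (i, k) = (σ i, k + 1) := by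
    rw [QG_apply, Function.update_self]
  have h2 : QG (Function.update h k 1) (σ i, k) = (σ i, k + 1) := by
    rw [QG_apply, Function.update_self]
    rfl
  rw [h1, h2]
  refine congrArg Prod.fst (QG_agree m _ _ (σ i, k + 1) ?_)
  intro j hj
  show Function.update h k σ ((σ i, k+1).2 + (j : Fin (m+1))) = _
  have hne : (σ i, k + 1).2 + (j : Fin (m+1)) ≠ k := by
    show k + 1 + (j : Fin (m+1)) ≠ k
    intro hcon
    have : ((1 + j : ℕ) : Fin (m+1)) = 0 := by
      apply add_left_cancel (a := k)
      rw [add_zero]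
      push_cast
      rw [← add_assoc]
      exact hcon
    rw [Fin.natCast_eq_zero] at this
    have := Nat.le_of_dvd (by omega) this
    omega
  rw [Function.update_of_ne hne, Function.update_of_ne hne]

end Grid
section Count

variable {r m : ℕ}

lemma card_filter_MkPerm (P : Equiv.Perm (Fin r) → Prop) [DecidablePred P] (k : Fin (m+1)) :
    (univ.filter fun h : Fin (m+1) → Equiv.Perm (Fin r) => P (MkPerm h k)).card
      = (univ.filter fun h : Fin (m+1) → Equiv.Perm (Fin r) => P (h k)).card := by
  apply Finset.card_bij (fun h (_ : h ∈ _) => Function.update h k (MkPerm h k))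
  · intro h hh
    simp only [mem_filter, mem_univ, true_and] at hh ⊢
    rw [Function.update_self]
    exact hh
  · intro h _ h' _ heq
    have hoff : ∀ j, j ≠ k → h j = h' j := by
      intro j hj
      have := congrFun heq j
      rwa [Function.update_of_ne hj, Function.update_of_ne hj] at this
    have hupd : Function.update h k 1 = Function.update h' k 1 := by
      funext j
      by_cases hj : j = k
      · subst hj; rw [Function.update_self, Function.update_self]
      · rw [Function.update_of_ne hj, Function.update_of_ne hj]; exact hoff j hj
    have hMk : MkPerm h k = MkPerm h' k := by
      have := congrFun heq k
      rwa [Function.update_self, Function.update_self] at this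
    have d1 : MkPerm h k = MkPerm (Function.update h k 1) k * h k := by
      have := MkPerm_update h k (h k)
      rwa [Function.update_eq_self] at this
    have d2 : MkPerm h' k = MkPerm (Function.update h' k 1) k * h' k := by
      have := MkPerm_update h' k (h' k)
      rwa [Function.update_eq_self] at this
    have hkk : h k = h' k := by
      have h3 := hMk
      rw [d1, d2, ← hupd] at h3
      exact mul_left_cancel h3
    funext j
    by_cases hj : j = k
    · subst hj; exact hkk
    · exact hoff j hj
  · intro h' hh'
    simp only [mem_filter, mem_univ, true_and] at hh'
    set g := Function.update h' k ((MkPerm (Function.update h' k 1) k)⁻¹ * h' k) with hg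
    have hupdg : Function.update g k 1 = Function.update h' k 1 := by
      funext j
      by_cases hj : j = k
      · subst hj; rw [Function.update_self, Function.update_self]
      · rw [Function.update_of_ne hj, Function.update_of_ne hj, hg,
          Function.update_of_ne hj]
    have hMkg : MkPerm g k = h' k := by
      have dg : MkPerm g k = MkPerm (Function.update g k 1) k * g k := by
        have := MkPerm_update g k (g k)
        rwa [Function.update_eq_self] at this
      rw [dg, hupdg, hg, Function.update_self, ← mul_assoc, mul_inv_cancel, one_mul]
    refine ⟨g, ?_, ?_⟩
    · simp only [mem_filter, mem_univ, true_and]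
      rw [hMkg]
      exact hh'
    · rw [hMkg, hg, Function.update_idem, Function.update_eq_self]

lemma card_filter_coord (P : Equiv.Perm (Fin r) → Prop) [DecidablePred P] (k : Fin (m+1)) :
    (univ.filter fun h : Fin (m+1) → Equiv.Perm (Fin r) => P (h k)).card
      = (univ.filter P).card * (Fintype.card (Equiv.Perm (Fin r)))^m := by
  rw [← card_filter_equiv (Equiv.funSplitAt k (Equiv.Perm (Fin r))).symm (fun h => P (h k))]
  have hfeq : (univ.filter fun pe : Equiv.Perm (Fin r) × ({j : Fin (m+1) // j ≠ k} → Equiv.Perm (Fin r)) =>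
        P (((Equiv.funSplitAt k (Equiv.Perm (Fin r))).symm pe) k))
      = (univ.filter fun pe : Equiv.Perm (Fin r) × ({j : Fin (m+1) // j ≠ k} → Equiv.Perm (Fin r)) =>
        P pe.1) := by
    apply Finset.filter_congr
    intro pe _
    have : ((Equiv.funSplitAt k (Equiv.Perm (Fin r))).symm pe) k = pe.1 := by
      simp [Equiv.funSplitAt]
    rw [this]
  rw [hfeq, card_filter_prod]
  have hterm : ∀ a : Equiv.Perm (Fin r),
      (univ.filter fun _ : {j : Fin (m+1) // j ≠ k} → Equiv.Perm (Fin r) => P a).card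
        = if P a then (Fintype.card (Equiv.Perm (Fin r)))^m else 0 := by
    intro a
    rw [Finset.filter_const]
    split_ifs
    · rw [Finset.card_univ, Fintype.card_fun, Fintype.card_subtype_compl,
        Fintype.card_subtype_eq, Fintype.card_fin]
      norm_num
    · exact Finset.card_empty
  rw [Finset.sum_congr rfl (fun a _ => hterm a), ← Finset.sum_filter, Finset.sum_const,
    smul_eq_mul]

end Count
section Core

variable {r m : ℕ}

lemma core_sum (hr : 1 ≤ r) (ℓ : ℕ) (h1 : 1 ≤ ℓ) (h2 : ℓ ≤ r) :
    (∑ h : Fin (m+1) → Equiv.Perm (Fin r), cycleCount (QG h) ((m+1) * ℓ)) * ((m+1) * ℓ)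
      = (r * (m+1)) * ((r-1).factorial * (Fintype.card (Equiv.Perm (Fin r)))^m) := by
  rw [Finset.sum_mul]
  have hstep : ∀ h : Fin (m+1) → Equiv.Perm (Fin r),
      cycleCount (QG h) ((m+1)*ℓ) * ((m+1)*ℓ)
        = (univ.filter fun x : Fin r × Fin (m+1) =>
            Function.minimalPeriod (⇑(QG h)) x = (m+1)*ℓ).card :=
    fun h => cycleCount_mul_eq _ _ (Nat.one_le_iff_ne_zero.mpr (Nat.mul_ne_zero (by omega) (by omega)))
  rw [Finset.sum_congr rfl (fun h _ => hstep h)]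
  have hswap : ∑ h : Fin (m+1) → Equiv.Perm (Fin r),
      (univ.filter fun x : Fin r × Fin (m+1) =>
        Function.minimalPeriod (⇑(QG h)) x = (m+1)*ℓ).card
    = ∑ x : Fin r × Fin (m+1),
      (univ.filter fun h : Fin (m+1) → Equiv.Perm (Fin r) =>
        Function.minimalPeriod (⇑(QG h)) x = (m+1)*ℓ).card := by
    simp_rw [Finset.card_filter]
    rw [Finset.sum_comm]
  rw [hswap]
  have hx : ∀ x : Fin r × Fin (m+1),
      (univ.filter fun h : Fin (m+1) → Equiv.Perm (Fin r) =>
        Function.minimalPeriod (⇑(QG h)) x = (m+1)*ℓ).card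
      = (r-1).factorial * (Fintype.card (Equiv.Perm (Fin r)))^m := by
    rintro ⟨i, k⟩
    have e1 : (univ.filter fun h : Fin (m+1) → Equiv.Perm (Fin r) =>
          Function.minimalPeriod (⇑(QG h)) (i, k) = (m+1)*ℓ)
        = (univ.filter fun h : Fin (m+1) → Equiv.Perm (Fin r) =>
          Function.minimalPeriod (⇑(MkPerm h k)) i = ℓ) := by
      apply Finset.filter_congr
      intro h _
      rw [QG_mp]
      constructor
      · intro hh
        exact Nat.eq_of_mul_eq_mul_left (by omega) hh
      · intro hh
        rw [hh]
    rw [e1,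
      card_filter_MkPerm (fun σ : Equiv.Perm (Fin r) => Function.minimalPeriod (⇑σ) i = ℓ) k,
      card_filter_coord (fun σ : Equiv.Perm (Fin r) => Function.minimalPeriod (⇑σ) i = ℓ) k,
      countMP r ℓ i h1 h2]
  rw [Finset.sum_congr rfl (fun x _ => hx x), Finset.sum_const, Finset.card_univ,
    Fintype.card_prod, Fintype.card_fin, Fintype.card_fin, smul_eq_mul]

lemma core_zero (M : ℕ) (hM : ¬ (m+1) ∣ M ∨ (m+1) * r < M)
    (h : Fin (m+1) → Equiv.Perm (Fin r)) : cycleCount (QG h) M = 0 := by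
  have hM1 : 1 ≤ M := by
    rcases hM with h' | h'
    · rcases Nat.eq_zero_or_pos M with rfl | h''
      · exact absurd (dvd_zero _) h'
      · exact h''
    · omega
  apply cycleCount_eq_zero_of_no_mp _ _ hM1
  rintro ⟨i, k⟩ hcon
  rw [QG_mp] at hcon
  have hL1 : 1 ≤ Function.minimalPeriod (⇑(MkPerm h k)) i := perm_mp_pos _ i
  have hLr : Function.minimalPeriod (⇑(MkPerm h k)) i ≤ r := by
    have := perm_mp_le_card (MkPerm h k) i
    simpa using this
  rcases hM with h' | h'
  · exact h' ⟨_, hcon.symm⟩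
  · have : M ≤ (m+1)*r := by
      rw [← hcon]
      exact Nat.mul_le_mul_left _ hLr
    omega

lemma coreQ (r d : ℕ) (hr : 1 ≤ r) (hd : 1 ≤ d) :
    (∀ ℓ, 1 ≤ ℓ → ℓ ≤ r →
      ((Fintype.card (Fin d → Equiv.Perm (Fin r)) : ℚ))⁻¹ *
        ∑ h : Fin d → Equiv.Perm (Fin r), (cycleCount (QG h) (d * ℓ) : ℚ) = (ℓ : ℚ)⁻¹)
    ∧ (∀ M, (¬ d ∣ M ∨ d * r < M) →
      ((Fintype.card (Fin d → Equiv.Perm (Fin r)) : ℚ))⁻¹ *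
        ∑ h : Fin d → Equiv.Perm (Fin r), (cycleCount (QG h) M : ℚ) = 0) := by
  obtain ⟨m, rfl⟩ : ∃ m, d = m + 1 := ⟨d - 1, by omega⟩
  constructor
  · intro ℓ h1 h2
    have hN := core_sum (r := r) (m := m) hr ℓ h1 h2
    have hcast : ((∑ h : Fin (m+1) → Equiv.Perm (Fin r), cycleCount (QG h) ((m+1) * ℓ) : ℕ) : ℚ)
        * (((m:ℚ)+1) * (ℓ:ℚ))
        = ((r:ℚ) * ((m:ℚ)+1)) * (((r-1).factorial : ℚ)
            * ((Fintype.card (Equiv.Perm (Fin r)) : ℚ))^m) := by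
      exact_mod_cast congrArg (Nat.cast : ℕ → ℚ) hN
    rw [Fintype.card_fun, Fintype.card_fin]
    push_cast at hcast ⊢
    have hC : (Fintype.card (Equiv.Perm (Fin r)) : ℚ) = (r.factorial : ℚ) := by
      rw [Fintype.card_perm, Fintype.card_fin]
    have hrfac : (r.factorial : ℚ) = (r : ℚ) * ((r-1).factorial : ℚ) := by
      exact_mod_cast congrArg (Nat.cast : ℕ → ℚ) (Nat.mul_factorial_pred (by omega)).symm
    have hCne : (Fintype.card (Equiv.Perm (Fin r)) : ℚ) ≠ 0 := by
      rw [hC]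
      exact_mod_cast (Nat.factorial_pos r).ne'
    have hlne : (ℓ : ℚ) ≠ 0 := by exact_mod_cast (by omega : ℓ ≠ 0)
    have hmne : ((m:ℚ)+1) ≠ 0 := by positivity
    field_simp
    apply mul_right_cancel₀ hmne
    linear_combination hcast
      - ((m:ℚ)+1) * (Fintype.card (Equiv.Perm (Fin r)) : ℚ)^m * (hC.trans hrfac)
  · intro M hM
    have : ∀ h : Fin (m+1) → Equiv.Perm (Fin r), (cycleCount (QG h) M : ℚ) = 0 := by
      intro h
      exact_mod_cast congrArg (Nat.cast : ℕ → ℚ) (core_zero M hM h)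
    rw [Finset.sum_congr rfl (fun h _ => this h), Finset.sum_const, smul_zero, mul_zero]

end Core

/-- If `f = p^r` with `p` monic irreducible of degree `d`, then `X_{dℓ}(σ_f) = 1/ℓ` for
`1 ≤ ℓ ≤ r`, and `X_m(σ_f) = 0` whenever `d ∤ m` or `m > dr`. -/
theorem stmt16 [Fintype F] (p : F[X]) (hp : p.Monic) (hirr : Irreducible p)
    (r d : ℕ) (hr : 1 ≤ r) (hd : d = p.natDegree) :
    (∀ ℓ, 1 ≤ ℓ → ℓ ≤ r →
        ((Fintype.card (Hf (p ^ r)) : ℚ))⁻¹ *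
            ∑ h : Hf (p ^ r), (cycleCount (tauF (p ^ r) * hPermF (p ^ r) h) (d * ℓ) : ℚ)
          = (ℓ : ℚ)⁻¹) ∧
    (∀ m, (¬ d ∣ m ∨ d * r < m) →
        ((Fintype.card (Hf (p ^ r)) : ℚ))⁻¹ *
            ∑ h : Hf (p ^ r), (cycleCount (tauF (p ^ r) * hPermF (p ^ r) h) m : ℚ)
          = 0) := by
  classical
  subst hd
  have hd1 : 1 ≤ p.natDegree := hirr.natDegree_pos
  have hnf : normalizedFactors (p ^ r) = Multiset.replicate r p := by
    rw [normalizedFactors_pow, normalizedFactors_irreducible hirr, hp.normalize_eq_self,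
      Multiset.nsmul_singleton]
  have hfac : facSet (p ^ r) = {p} := by
    unfold facSet
    rw [hnf, Multiset.toFinset_replicate, if_neg (by omega)]
  have hcount : (normalizedFactors (p ^ r)).count p = r := by
    rw [hnf, Multiset.count_replicate_self]
  have hmem : p ∈ facSet (p ^ r) := by rw [hfac]; exact Finset.mem_singleton_self p
  letI huniq : Unique {x // x ∈ facSet (p ^ r)} :=
    { default := ⟨p, hmem⟩
      uniq := by
        rintro ⟨q, hq⟩
        have : q = p := by rw [hfac] at hq; exact Finset.mem_singleton.mp hq
        exact Subtype.ext this }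
  let eT : Tf (p ^ r) ≃ Fin ((normalizedFactors (p ^ r)).count p) × Fin (p.natDegree) :=
    sigmaUniqueIndex _
  have hkey : ∀ (h : Hf (p ^ r)) (n : ℕ),
      cycleCount (tauF (p ^ r) * hPermF (p ^ r) h) n
        = cycleCount (QG (h default)) n := by
    intro h n
    have hconj : eT.permCongr (tauF (p ^ r) * hPermF (p ^ r) h) = QG (h default) := by
      apply Equiv.ext
      rintro ⟨i, k⟩
      rfl
    rw [← cycleCount_permCongr eT (tauF (p ^ r) * hPermF (p ^ r) h) n, hconj]
  have hsum : ∀ n : ℕ, ∑ h : Hf (p ^ r), (cycleCount (tauF (p ^ r) * hPermF (p ^ r) h) n : ℚ)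
      = ∑ g : Fin (p.natDegree) →
            Equiv.Perm (Fin ((normalizedFactors (p ^ r)).count p)),
          (cycleCount (QG g) n : ℚ) := by
    intro n
    apply Fintype.sum_equiv (Equiv.piUnique _)
    intro h
    rw [hkey h n]
    rfl
  have hcard : Fintype.card (Hf (p ^ r))
      = Fintype.card (Fin (p.natDegree) →
          Equiv.Perm (Fin ((normalizedFactors (p ^ r)).count p))) :=
    Fintype.card_congr (Equiv.piUnique _)
  obtain ⟨core1, core2⟩ := coreQ ((normalizedFactors (p ^ r)).count p) p.natDegree
    (by omega) hd1
  constructor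
  · intro l hl1 hl2
    rw [hcard, hsum]
    exact core1 l hl1 (by omega)
  · intro M hM
    rw [hcard, hsum]
    apply core2 M
    rcases hM with h' | h'
    · exact Or.inl h'
    · exact Or.inr (by rw [hcount]; exact h')
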